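/- arXiv:1612.07350 — 2 statements merged into one kernel-verified Lean document; each statement's English description precedes it below -/
import Mathlib

section
/- Lemma (no spurious termination of the correction loop, case l = 0, u = ∞): Let B be a symmetric positive definite n×n matrix, x ∈ R^n with x ≥ 0, g ∈ R^n, and define F = {i : x_i > 0}, F̄ = {i : x_i = 0}, and A_0 = {i ∈ F̄ : g_i ≥ 0}. Run the correction loop: at iteration t, let p^t with p^t restricted to the complement of A_t solve B_{S,S} p^t_S = -g_S (S = complement of A_t) and p^t_{A_t} = 0; set C_t = {i ∈ F̄ \ A_t : p^t_i < 0} and A_{t+1} = A_t ∪ C_t; terminate when C_t = ∅. If the loop terminates at iteration t̂ with p^{t̂} = 0, then t̂ = 0 and g_i = 0 for all i ∉ A_0; consequently x satisfies the first-order optimality conditions g_i = 0 for x_i > 0 and g_i ≥ 0 for x_i = 0. -/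
open Matrix

/-- Lemma 2, case `l = 0`, `u = ∞`: if the active-set correction
loop terminates at iteration `t̂` with `p^{t̂} = 0`, then `t̂ = 0`, the gradient
vanishes off `A_0`, and the iterate is first-order optimal. -/
theorem stmt_5 (n : ℕ) (B : Matrix (Fin n) (Fin n) ℝ) (hB : B.PosDef)
    (x g : Fin n → ℝ) (hx : ∀ i, 0 ≤ x i)
    (A : ℕ → Set (Fin n)) (p : ℕ → Fin n → ℝ) (that : ℕ)
    (hA0 : A 0 = {i | x i = 0 ∧ 0 ≤ g i})
    (hsys : ∀ t, ∀ i ∉ A t, B.mulVec (p t) i = -g i)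
    (hpA : ∀ t, ∀ i ∈ A t, p t i = 0)
    (hstep : ∀ t, A (t + 1) = A t ∪ {i | x i = 0 ∧ i ∉ A t ∧ p t i < 0})
    (hrun : ∀ t < that, ({i | x i = 0 ∧ i ∉ A t ∧ p t i < 0} : Set (Fin n)).Nonempty)
    (hterm : ({i | x i = 0 ∧ i ∉ A that ∧ p that i < 0} : Set (Fin n)) = ∅)
    (hp0 : p that = 0) :
    that = 0 ∧ (∀ i, i ∉ A 0 → g i = 0) ∧
      (∀ i, 0 < x i → g i = 0) ∧ (∀ i, x i = 0 → 0 ≤ g i) := by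
  have hmono : ∀ t, A 0 ⊆ A t := by
    intro t
    induction t with
    | zero => exact subset_rfl
    | succ t ih => rw [hstep t]; exact ih.trans Set.subset_union_left
  have hthat : that = 0 := by
    by_contra h
    obtain ⟨t, rfl⟩ : ∃ t, that = t + 1 :=
      ⟨that - 1, (Nat.succ_pred_eq_of_pos (Nat.pos_of_ne_zero h)).symm⟩
    obtain ⟨j, hjx, hjA, hjp⟩ := hrun t (Nat.lt_succ_self t)
    have hg1 : ∀ i, i ∉ A (t + 1) → g i = 0 := by
      intro i hi
      have := hsys (t + 1) i hi
      rw [hp0] at this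
      simpa [Matrix.mulVec_zero, neg_eq_zero, eq_comm] using this
    set q := p t with hq
    have hqpos : 0 < q ⬝ᵥ B.mulVec q := by
      have hqne : q ≠ 0 := by
        intro h0
        rw [h0] at hjp
        exact absurd hjp (by simp)
      simpa using hB.dotProduct_mulVec_pos hqne
    have hle : q ⬝ᵥ B.mulVec q ≤ 0 := by
      rw [dotProduct]
      apply Finset.sum_nonpos
      intro i _
      by_cases hiA : i ∈ A t
      · simp [hq, hpA t i hiA]
      · have hBi : B.mulVec q i = -g i := hsys t i hiA
        by_cases hiC : i ∈ ({i | x i = 0 ∧ i ∉ A t ∧ p t i < 0} : Set (Fin n))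
        · obtain ⟨hix, _, hip⟩ := hiC
          have hgi : g i < 0 := by
            have hnA0 : i ∉ A 0 := fun hh => hiA (hmono t hh)
            rw [hA0] at hnA0
            by_contra hge
            exact hnA0 ⟨hix, le_of_not_gt hge⟩
          rw [hBi]
          nlinarith
        · have hnA1 : i ∉ A (t + 1) := by
            rw [hstep t]
            rintro (hh | hh)
            · exact hiA hh
            · exact hiC hh
          rw [hBi, hg1 i hnA1]; simp
    linarith
  subst hthat
  have hg0 : ∀ i, i ∉ A 0 → g i = 0 := by
    intro i hi
    have := hsys 0 i hi
    rw [hp0] at this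
    simpa [eq_comm] using this
  refine ⟨rfl, hg0, ?_, ?_⟩
  · intro i hxi
    apply hg0
    rw [hA0]
    exact fun hh => absurd hh.1 (ne_of_gt hxi)
  · intro i hxi
    by_cases hi : i ∈ A 0
    · rw [hA0] at hi; exact hi.2
    · exact le_of_eq (hg0 i hi).symm
end

section
/- Let B be symmetric positive definite on R^n, g ∈ R^n, and let disjoint sets F, Ā, C partition a subset of {1,...,n} with all remaining indices fixed to zero. Suppose p̂ ≠ 0 solves the linear system B_{S,S} p̂_S = -g_S with S = F ∪ Ā ∪ C and that g_F = 0 and g_Ā = 0. Then (g_C)ᵀ p̂_C = -p̂ᵀBp̂ < 0. In particular, if additionally g_i < 0 and p̂_i < 0 for all i ∈ C with C nonempty, a contradiction arises, so no such p̂ exists. -/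
open Matrix

/-- the key contradiction argument of Lemma 2. -/
theorem stmt_6 (n : ℕ) (B : Matrix (Fin n) (Fin n) ℝ) (hB : B.PosDef)
    (g phat : Fin n → ℝ) (F Abar C : Finset (Fin n))
    (hFAbar : Disjoint F Abar) (hFC : Disjoint F C) (hAbarC : Disjoint Abar C)
    (hsupp : ∀ i ∉ F ∪ Abar ∪ C, phat i = 0)
    (hsys : ∀ i ∈ F ∪ Abar ∪ C, B.mulVec phat i = -g i)
    (hgF : ∀ i ∈ F, g i = 0) (hgAbar : ∀ i ∈ Abar, g i = 0)
    (hp : phat ≠ 0) :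
    (∑ i ∈ C, g i * phat i = -(phat ⬝ᵥ B.mulVec phat)) ∧
    (∑ i ∈ C, g i * phat i < 0) ∧
    ((C.Nonempty ∧ ∀ i ∈ C, g i < 0 ∧ phat i < 0) → False) := by
  have hquad : phat ⬝ᵥ B.mulVec phat = ∑ i ∈ F ∪ Abar ∪ C, phat i * B.mulVec phat i := by
    rw [dotProduct]
    refine (Finset.sum_subset (Finset.subset_univ _) ?_).symm
    intro i _ hi
    rw [hsupp i hi, zero_mul]
  have key : ∑ i ∈ C, g i * phat i = -(phat ⬝ᵥ B.mulVec phat) := by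
    have h1 : ∑ i ∈ F ∪ Abar ∪ C, phat i * B.mulVec phat i
        = -∑ i ∈ F ∪ Abar ∪ C, g i * phat i := by
      rw [← Finset.sum_neg_distrib]
      exact Finset.sum_congr rfl fun i hi => by rw [hsys i hi]; ring
    have h2 : ∑ i ∈ F ∪ Abar ∪ C, g i * phat i = ∑ i ∈ C, g i * phat i := by
      rw [Finset.sum_union (by
        rw [Finset.disjoint_union_left]; exact ⟨hFC, hAbarC⟩),
        Finset.sum_union hFAbar]
      rw [Finset.sum_eq_zero (fun i hi => by rw [hgF i hi, zero_mul]),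
        Finset.sum_eq_zero (fun i hi => by rw [hgAbar i hi, zero_mul])]
      ring
    rw [hquad, h1, h2, neg_neg]
  have hpos : 0 < phat ⬝ᵥ B.mulVec phat := hB.dotProduct_mulVec_pos hp
  refine ⟨key, by rw [key]; linarith, ?_⟩
  rintro ⟨⟨j, hj⟩, h⟩
  have : 0 < ∑ i ∈ C, g i * phat i := by
    apply Finset.sum_pos (fun i hi => mul_pos_of_neg_of_neg (h i hi).1 (h i hi).2) ⟨j, hj⟩
  linarith [key ▸ this]
end
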